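/- arXiv:2505.22967 — 9 statements merged into one kernel-verified Lean document; each statement's English description precedes it below -/
import Mathlib

section
/- Let E : V → V → Prop and let a b : V satisfy E a b, and let E' be the subdivision of E at (a,b). Then for all x y : V, Relation.ReflTransGen E x y holds if and only if Relation.ReflTransGen E' (some x) (some y) holds. -/
/-- The subdivision of an edge relation `E` at the edge `(a,b)`: a new vertex
(`none`) is inserted on the edge from `a` to `b`. -/
def Subdiv {V : Type*} (E : V → V → Prop) (a b : V) :
    Option V → Option V → Prop
  | some x, some y => E x y ∧ ¬(x = a ∧ y = b)
  | some x, none => x = a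
  | none, some y => y = b
  | none, none => False

/-- Subdivision at an existing edge preserves reachability between the
original vertices, in both directions. -/
theorem subdiv_reflTransGen_iff {V : Type*} (E : V → V → Prop)
    (a b : V) (hab : E a b) :
    ∀ x y : V, Relation.ReflTransGen E x y ↔
      Relation.ReflTransGen (Subdiv E a b) (some x) (some y) := by
  intro x y
  constructor
  · intro h
    induction h with
    | refl => exact .refl
    | tail _ hcd ih =>
      rename_i c d _
      by_cases hc : c = a ∧ d = b
      · obtain ⟨rfl, rfl⟩ := hc
        exact (ih.tail (show Subdiv E c d (some c) none from rfl)).tail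
          (show Subdiv E c d none (some d) from rfl)
      · exact ih.tail ⟨hcd, hc⟩
  · intro h
    have key : ∀ (o : Option V) (y : V), Relation.ReflTransGen (Subdiv E a b) o (some y) →
        Relation.ReflTransGen E (o.getD b) y := by
      intro o y h
      induction h using Relation.ReflTransGen.head_induction_on with
      | refl => exact .refl
      | head h' _ ih =>
        rename_i p q _
        match p, q with
        | some c, some d => exact Relation.ReflTransGen.head h'.1 ih
        | some c, none => exact h' ▸ Relation.ReflTransGen.head hab ih
        | none, some d => exact h' ▸ ih
    exact key (some x) y h
end

section
/- Let E : V → V → Prop be acyclic and let a b : V satisfy E a b. Then the subdivision E' of E at (a,b) is acyclic, i.e. Relation.TransGen E' is irreflexive on Option V. -/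
/-- Subdivision of an acyclic edge relation at an existing edge is acyclic. -/
theorem subdiv_acyclic {V : Type*} (E : V → V → Prop)
    (hacyc : ∀ v : V, ¬ Relation.TransGen E v v)
    (a b : V) (hab : E a b) :
    ∀ v : Option V, ¬ Relation.TransGen (Subdiv E a b) v v := by
  have key : ∀ u v : Option V, Relation.TransGen (Subdiv E a b) u v →
      (match u, v with
        | some x, some y => Relation.TransGen E x y
        | some x, none => Relation.ReflTransGen E x a
        | none, some y => Relation.ReflTransGen E b y
        | none, none => Relation.ReflTransGen E b a) := by
    intro u v h
    induction h with
    | single hstep =>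
      rename_i v
      match u, v, hstep with
      | some x, some y, ⟨hxy, _⟩ => exact Relation.TransGen.single hxy
      | some x, none, hx => subst hx; exact Relation.ReflTransGen.refl
      | none, some y, hy => subst hy; exact Relation.ReflTransGen.refl
      | none, none, hf => exact hf.elim
    | tail hwv hstep ih =>
      rename_i w v
      match u, w, v, hstep with
      | some x, some y, some z, ⟨hyz, _⟩ => exact ih.tail hyz
      | none, some y, some z, ⟨hyz, _⟩ => exact ih.tail hyz
      | some x, some y, none, hy => subst hy; exact ih.to_reflTransGen
      | none, some y, none, hy => subst hy; exact ih
      | some x, none, some z, hz => subst hz; exact Relation.TransGen.tail' ih hab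
      | none, none, some z, hz =>
          subst hz; exact Relation.ReflTransGen.refl
      | some x, none, none, hf => exact hf.elim
      | none, none, none, hf => exact hf.elim
  intro v hv
  match v with
  | some x => exact hacyc x (key _ _ hv)
  | none => exact hacyc b (Relation.TransGen.tail' (key _ _ hv) hab)
end

section
/- Let E : V → V → Prop be fully connected with respect to input i and output o, and let a b : V satisfy E a b. Then the subdivision E' of E at (a,b) is fully connected with respect to input (some i) and output (some o): every vertex of Option V (including the new vertex none) is reachable from some i under E' and reaches some o under E'. -/
lemma subdiv_lift {V : Type*} {E : V → V → Prop} {a b : V} {x y : V}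
    (h : Relation.ReflTransGen E x y) :
    Relation.ReflTransGen (Subdiv E a b) (some x) (some y) := by
  induction h with
  | refl => exact .refl
  | tail _ hst ih =>
    rename_i s t _
    by_cases hc : s = a ∧ t = b
    · exact ih.tail (show Subdiv E a b (some s) none from hc.1)
        |>.tail (show Subdiv E a b none (some t) from hc.2)
    · exact ih.tail ⟨hst, hc⟩

/-- Subdivision at an existing edge preserves full connectivity with respect
to the input vertex `i` and output vertex `o`. -/
theorem subdiv_fullyConnected {V : Type*} (E : V → V → Prop) (i o : V)
    (hconn : ∀ v : V, Relation.ReflTransGen E i v ∧ Relation.ReflTransGen E v o)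
    (a b : V) (hab : E a b) :
    ∀ v : Option V,
      Relation.ReflTransGen (Subdiv E a b) (some i) v ∧
      Relation.ReflTransGen (Subdiv E a b) v (some o) := by
  intro v
  match v with
  | some x => exact ⟨subdiv_lift (hconn x).1, subdiv_lift (hconn x).2⟩
  | none =>
    refine ⟨(subdiv_lift (hconn a).1).tail (show Subdiv E a b (some a) none from rfl),
      Relation.ReflTransGen.head (show Subdiv E a b none (some b) from rfl)
        (subdiv_lift (hconn b).2)⟩
end

section
/- Let E : V → V → Prop be acyclic and let a b c : V satisfy E a b and E b c. Then the deletion of b with bypass edge, E' x y ↔ (E x y ∧ x ≠ b ∧ y ≠ b) ∨ (x = a ∧ y = c), is acyclic. -/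
/-- Deleting a node `b` lying on a path `a → b → c` (with a bypass edge from
`a` to `c`) in an acyclic edge relation yields an acyclic relation. -/
theorem delete_acyclic {V : Type*} (E : V → V → Prop)
    (hacyc : ∀ v : V, ¬ Relation.TransGen E v v)
    (a b c : V) (hab : E a b) (hbc : E b c) :
    ∀ v : V,
      ¬ Relation.TransGen
        (fun x y => (E x y ∧ x ≠ b ∧ y ≠ b) ∨ (x = a ∧ y = c)) v v := by
  intro v hv
  apply hacyc v
  have h : ∀ x y, ((E x y ∧ x ≠ b ∧ y ≠ b) ∨ (x = a ∧ y = c)) → Relation.TransGen E x y := by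
    rintro x y (⟨h1, -, -⟩ | ⟨rfl, rfl⟩)
    · exact Relation.TransGen.single h1
    · exact Relation.TransGen.head hab (Relation.TransGen.single hbc)
  have := Relation.TransGen.mono h v v hv
  rwa [Relation.transGen_idem] at this
end

section
/- Let E : V → V → Prop, and let a b c : V satisfy E a b and E b c. Assume a is the unique in-neighbor of b (∀ x, E x b → x = a) and c is the unique out-neighbor of b (∀ y, E b y → y = c). Let E' be the deletion of b with bypass edge, E' x y ↔ (E x y ∧ x ≠ b ∧ y ≠ b) ∨ (x = a ∧ y = c). Then for all x y : V with x ≠ b and y ≠ b, Relation.ReflTransGen E x y holds if and only if Relation.ReflTransGen E' x y holds. -/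
/-- If `a → b → c` is a linear path (i.e. `a` is the unique in-neighbor of `b`
and `c` its unique out-neighbor), then deleting `b` with a bypass edge
preserves reachability between vertices other than `b`, in both directions. -/
theorem delete_reflTransGen_iff {V : Type*} (E : V → V → Prop)
    (a b c : V) (hab : E a b) (hbc : E b c)
    (hin : ∀ x, E x b → x = a) (hout : ∀ y, E b y → y = c) :
    ∀ x y : V, x ≠ b → y ≠ b →
      (Relation.ReflTransGen E x y ↔
        Relation.ReflTransGen
          (fun u v => (E u v ∧ u ≠ b ∧ v ≠ b) ∨ (u = a ∧ v = c)) x y) := by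
  classical
  set E' : V → V → Prop := fun u v => (E u v ∧ u ≠ b ∧ v ≠ b) ∨ (u = a ∧ v = c) with hE'
  have key : ∀ y, y ≠ b → ∀ x, Relation.ReflTransGen E x y →
      Relation.ReflTransGen E' (if x = b then c else x) y := by
    intro y hy x h
    induction h using Relation.ReflTransGen.head_induction_on with
    | refl => rw [if_neg hy]
    | head hxz htail ih =>
      rename_i u v
      by_cases hu : u = b
      · have hv : v = c := hout _ (hu ▸ hxz)
        rw [if_pos hu]
        by_cases hc : v = b
        · rw [if_pos hc] at ih; exact ih
        · rw [if_neg hc] at ih; exact hv ▸ ih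
      · rw [if_neg hu]
        by_cases hv : v = b
        · have hua : u = a := hin _ (hv ▸ hxz)
          rw [if_pos hv] at ih
          exact Relation.ReflTransGen.head (Or.inr ⟨hua, rfl⟩) ih
        · rw [if_neg hv] at ih
          exact Relation.ReflTransGen.head (Or.inl ⟨hxz, hu, hv⟩) ih
  intro x y hx hy
  constructor
  · intro h
    have := key y hy x h
    rwa [if_neg hx] at this
  · intro h
    clear hy
    induction h with
    | refl => exact Relation.ReflTransGen.refl
    | tail _ hedge ih =>
      rcases hedge with ⟨he, _, _⟩ | ⟨hu, hv⟩
      · exact ih.tail he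
      · subst hu; subst hv
        exact (ih.tail hab).tail hbc
end

section
/- Let E : V → V → Prop be fully connected with respect to input i and output o, let a b c : V satisfy E a b and E b c with i ≠ b and o ≠ b, and assume a is the unique in-neighbor of b (∀ x, E x b → x = a) and c is the unique out-neighbor of b (∀ y, E b y → y = c). Then the deletion E' of b with bypass edge satisfies: for every vertex x ≠ b, Relation.ReflTransGen E' i x and Relation.ReflTransGen E' x o. -/
/-- Deleting a node `b` on a linear path `a → b → c` (with bypass edge)
preserves full connectivity: every remaining vertex is still reachable from
the input `i` and still reaches the output `o`. -/
theorem delete_fullyConnected {V : Type*} (E : V → V → Prop) (i o : V)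
    (hconn : ∀ v : V, Relation.ReflTransGen E i v ∧ Relation.ReflTransGen E v o)
    (a b c : V) (hab : E a b) (hbc : E b c)
    (hib : i ≠ b) (hob : o ≠ b)
    (hin : ∀ x, E x b → x = a) (hout : ∀ y, E b y → y = c) :
    ∀ x : V, x ≠ b →
      Relation.ReflTransGen
        (fun u v => (E u v ∧ u ≠ b ∧ v ≠ b) ∨ (u = a ∧ v = c)) i x ∧
      Relation.ReflTransGen
        (fun u v => (E u v ∧ u ≠ b ∧ v ≠ b) ∨ (u = a ∧ v = c)) x o := by
  set E' : V → V → Prop := fun u v => (E u v ∧ u ≠ b ∧ v ≠ b) ∨ (u = a ∧ v = c) with hE'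
  -- a ≠ b
  have hanb : a ≠ b := by
    intro h
    subst h
    have key : ∀ v, Relation.ReflTransGen E i v → v ≠ a := by
      intro v h
      induction h with
      | refl => exact hib
      | tail p step ih =>
        intro hv
        subst hv
        exact ih (hin _ step)
    exact key a (hconn a).1 rfl
  -- main lemma
  have main : ∀ u v, Relation.ReflTransGen E u v → u ≠ b →
      (v ≠ b → Relation.ReflTransGen E' u v) ∧
      (v = b → Relation.ReflTransGen E' u a) := by
    intro u v h hu
    induction h with
    | refl => exact ⟨fun _ => Relation.ReflTransGen.refl, fun hv => absurd hv hu⟩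
    | @tail w v p step ih =>
      constructor
      · intro hv
        by_cases hw : w = b
        · subst hw
          have hvc : v = c := hout _ step
          subst hvc
          exact (ih.2 rfl).tail (Or.inr ⟨rfl, rfl⟩)
        · exact (ih.1 hw).tail (Or.inl ⟨step, hw, hv⟩)
      · intro hv
        subst hv
        have hwa : w = a := hin _ step
        subst hwa
        exact ih.1 hanb
  intro x hx
  exact ⟨(main i x (hconn x).1 hib).1 hx, (main x o (hconn x).2 hx).1 hob⟩
end

section
/- Let E1 : V1 → V1 → Prop be fully connected with respect to input i1 and output o1, and E2 : V2 → V2 → Prop be fully connected with respect to input i2 and output o2. Then the serial composition E of E1 and E2 on V1 ⊕ V2 (through o1 and i2) is fully connected with respect to input Sum.inl i1 and output Sum.inr o2: every vertex of V1 ⊕ V2 is reachable from Sum.inl i1 under E and reaches Sum.inr o2 under E. -/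
/-- Serial composition of two edge relations on `V1 ⊕ V2`, connecting the
designated output `o1` of the first graph to the designated input `i2` of
the second. -/
def SerialComp {V1 V2 : Type*} (E1 : V1 → V1 → Prop) (E2 : V2 → V2 → Prop)
    (o1 : V1) (i2 : V2) : V1 ⊕ V2 → V1 ⊕ V2 → Prop
  | Sum.inl x, Sum.inl y => E1 x y
  | Sum.inr x, Sum.inr y => E2 x y
  | Sum.inl x, Sum.inr y => x = o1 ∧ y = i2
  | Sum.inr _, Sum.inl _ => False


private lemma serialComp_inl {V1 V2 : Type*} {E1 : V1 → V1 → Prop} {E2 : V2 → V2 → Prop}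
    {o1 : V1} {i2 : V2} {a b : V1} (h : Relation.ReflTransGen E1 a b) :
    Relation.ReflTransGen (SerialComp E1 E2 o1 i2) (Sum.inl a) (Sum.inl b) := by
  induction h with
  | refl => exact Relation.ReflTransGen.refl
  | tail _ h ih => exact ih.tail h

private lemma serialComp_inr {V1 V2 : Type*} {E1 : V1 → V1 → Prop} {E2 : V2 → V2 → Prop}
    {o1 : V1} {i2 : V2} {a b : V2} (h : Relation.ReflTransGen E2 a b) :
    Relation.ReflTransGen (SerialComp E1 E2 o1 i2) (Sum.inr a) (Sum.inr b) := by
  induction h with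
  | refl => exact Relation.ReflTransGen.refl
  | tail _ h ih => exact ih.tail h

/-- The serial composition of two fully connected edge relations is fully
connected with respect to input `Sum.inl i1` and output `Sum.inr o2`. -/
theorem serialComp_fullyConnected {V1 V2 : Type*}
    (E1 : V1 → V1 → Prop) (i1 o1 : V1)
    (E2 : V2 → V2 → Prop) (i2 o2 : V2)
    (hconn1 : ∀ v : V1, Relation.ReflTransGen E1 i1 v ∧ Relation.ReflTransGen E1 v o1)
    (hconn2 : ∀ v : V2, Relation.ReflTransGen E2 i2 v ∧ Relation.ReflTransGen E2 v o2) :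
    ∀ v : V1 ⊕ V2,
      Relation.ReflTransGen (SerialComp E1 E2 o1 i2) (Sum.inl i1) v ∧
      Relation.ReflTransGen (SerialComp E1 E2 o1 i2) v (Sum.inr o2) := by
  have bridge : SerialComp E1 E2 o1 i2 (Sum.inl o1) (Sum.inr i2) := ⟨rfl, rfl⟩
  intro v
  cases v with
  | inl x =>
    refine ⟨serialComp_inl (hconn1 x).1, ?_⟩
    exact ((serialComp_inl (hconn1 x).2).tail bridge).trans (serialComp_inr (hconn2 i2).2)
  | inr x =>
    refine ⟨?_, serialComp_inr (hconn2 x).2⟩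
    exact ((serialComp_inl (hconn1 i1).2).tail bridge).trans (serialComp_inr (hconn2 x).1)
end

section
/- Let (A1, on VA1, input iA1, output oA1), (A2, on VA2, input iA2, output oA2), (B1, on VB1, input iB1, output oB1), (B2, on VB2, input iB2, output oB2) be four typed directed graphs with labels in L, each well-typed, acyclic, and fully connected with respect to its own input and output. Suppose the crossover type conditions ToutA1 oA1 = TinB2 iB2 and ToutA2 oA2 = TinB1 iB1 hold. Then both swapped serial compositions — the composition of A1 with B2 (through oA1 and iB2) and the composition of A2 with B1 (through oA2 and iB1) — are well-typed, acyclic, and fully connected with respect to input Sum.inl iA1 and output Sum.inr oB2, respectively input Sum.inl iA2 and output Sum.inr oB1. -/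
section Aux
variable {V1 V2 L : Type*} {E1 : V1 → V1 → Prop} {E2 : V2 → V2 → Prop} {o1 : V1} {i2 : V2}

lemma serial_inl_lift {a b : V1} (h : Relation.ReflTransGen E1 a b) :
    Relation.ReflTransGen (SerialComp E1 E2 o1 i2) (Sum.inl a) (Sum.inl b) := by
  induction h with
  | refl => exact .refl
  | tail _ h ih => exact ih.tail h

lemma serial_inr_lift {a b : V2} (h : Relation.ReflTransGen E2 a b) :
    Relation.ReflTransGen (SerialComp E1 E2 o1 i2) (Sum.inr a) (Sum.inr b) := by
  induction h with
  | refl => exact .refl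
  | tail _ h ih => exact ih.tail h

lemma serial_to_inl {a b : V1 ⊕ V2} (h : Relation.TransGen (SerialComp E1 E2 o1 i2) a b) :
    ∀ y, b = Sum.inl y → ∃ x, a = Sum.inl x ∧ Relation.TransGen E1 x y := by
  induction h with
  | single h =>
    intro y hy
    subst hy
    cases a with
    | inl x => exact ⟨x, rfl, .single h⟩
    | inr x => exact absurd h id
  | @tail b c _ h ih =>
    intro y hy
    subst hy
    cases b with
    | inl z =>
      obtain ⟨x, rfl, hx⟩ := ih z rfl
      exact ⟨x, rfl, hx.tail h⟩
    | inr z => exact absurd h id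

lemma serial_from_inr {a b : V1 ⊕ V2} (h : Relation.TransGen (SerialComp E1 E2 o1 i2) a b) :
    ∀ x, a = Sum.inr x → ∃ y, b = Sum.inr y ∧ Relation.TransGen E2 x y := by
  induction h with
  | single h =>
    intro x hx
    subst hx
    rename_i b
    cases b with
    | inl y => exact absurd h id
    | inr y => exact ⟨y, rfl, .single h⟩
  | @tail b c _ h ih =>
    intro x hx
    obtain ⟨y, hb, hy⟩ := ih x hx
    subst hb
    cases c with
    | inl z => exact absurd h id
    | inr z => exact ⟨z, rfl, hy.tail h⟩

lemma serial_valid {Tin1 Tout1 : V1 → L} {Tin2 Tout2 : V2 → L} {i1 : V1} {o2 : V2}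
    (hwt1 : ∀ u v, E1 u v → Tout1 u = Tin1 v)
    (hwt2 : ∀ u v, E2 u v → Tout2 u = Tin2 v)
    (hac1 : ∀ v, ¬ Relation.TransGen E1 v v)
    (hac2 : ∀ v, ¬ Relation.TransGen E2 v v)
    (hco1 : ∀ v, Relation.ReflTransGen E1 i1 v ∧ Relation.ReflTransGen E1 v o1)
    (hco2 : ∀ v, Relation.ReflTransGen E2 i2 v ∧ Relation.ReflTransGen E2 v o2)
    (hty : Tout1 o1 = Tin2 i2) :
    (∀ u v : V1 ⊕ V2, SerialComp E1 E2 o1 i2 u v →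
        Sum.elim Tout1 Tout2 u = Sum.elim Tin1 Tin2 v) ∧
      (∀ v : V1 ⊕ V2, ¬ Relation.TransGen (SerialComp E1 E2 o1 i2) v v) ∧
      (∀ v : V1 ⊕ V2,
        Relation.ReflTransGen (SerialComp E1 E2 o1 i2) (Sum.inl i1) v ∧
        Relation.ReflTransGen (SerialComp E1 E2 o1 i2) v (Sum.inr o2)) := by
  refine ⟨?_, ?_, ?_⟩
  · rintro (u | u) (v | v) h
    · exact hwt1 u v h
    · obtain ⟨rfl, rfl⟩ := h; exact hty
    · exact absurd h id
    · exact hwt2 u v h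
  · rintro (v | v) h
    · obtain ⟨x, hx, h⟩ := serial_to_inl h v rfl
      cases hx
      exact hac1 _ h
    · obtain ⟨y, hy, h⟩ := serial_from_inr h v rfl
      cases hy
      exact hac2 _ h
  · rintro (v | v)
    · refine ⟨serial_inl_lift (hco1 v).1, ?_⟩
      exact ((serial_inl_lift (hco1 v).2).tail (show SerialComp E1 E2 o1 i2 (Sum.inl o1) (Sum.inr i2) from ⟨rfl, rfl⟩)).trans (serial_inr_lift (hco2 i2).2)
    · refine ⟨?_, serial_inr_lift (hco2 v).2⟩
      exact ((serial_inl_lift (hco1 i1).2).tail (show SerialComp E1 E2 o1 i2 (Sum.inl o1) (Sum.inr i2) from ⟨rfl, rfl⟩)).trans (serial_inr_lift (hco2 v).1)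

end Aux

/-- Crossover: given four well-typed, acyclic, fully connected typed directed
graphs `A1, A2, B1, B2` with type-compatible crossover interfaces
(`ToutA1 oA1 = TinB2 iB2` and `ToutA2 oA2 = TinB1 iB1`), both swapped serial
compositions `A1 ⋈ B2` and `A2 ⋈ B1` are well-typed, acyclic, and fully
connected with respect to their inherited inputs and outputs. -/
theorem crossover_valid {VA1 VA2 VB1 VB2 L : Type*}
    (A1 : VA1 → VA1 → Prop) (TinA1 ToutA1 : VA1 → L) (iA1 oA1 : VA1)
    (A2 : VA2 → VA2 → Prop) (TinA2 ToutA2 : VA2 → L) (iA2 oA2 : VA2)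
    (B1 : VB1 → VB1 → Prop) (TinB1 ToutB1 : VB1 → L) (iB1 oB1 : VB1)
    (B2 : VB2 → VB2 → Prop) (TinB2 ToutB2 : VB2 → L) (iB2 oB2 : VB2)
    (hwtA1 : ∀ u v, A1 u v → ToutA1 u = TinA1 v)
    (hwtA2 : ∀ u v, A2 u v → ToutA2 u = TinA2 v)
    (hwtB1 : ∀ u v, B1 u v → ToutB1 u = TinB1 v)
    (hwtB2 : ∀ u v, B2 u v → ToutB2 u = TinB2 v)
    (hacA1 : ∀ v, ¬ Relation.TransGen A1 v v)
    (hacA2 : ∀ v, ¬ Relation.TransGen A2 v v)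
    (hacB1 : ∀ v, ¬ Relation.TransGen B1 v v)
    (hacB2 : ∀ v, ¬ Relation.TransGen B2 v v)
    (hcoA1 : ∀ v, Relation.ReflTransGen A1 iA1 v ∧ Relation.ReflTransGen A1 v oA1)
    (hcoA2 : ∀ v, Relation.ReflTransGen A2 iA2 v ∧ Relation.ReflTransGen A2 v oA2)
    (hcoB1 : ∀ v, Relation.ReflTransGen B1 iB1 v ∧ Relation.ReflTransGen B1 v oB1)
    (hcoB2 : ∀ v, Relation.ReflTransGen B2 iB2 v ∧ Relation.ReflTransGen B2 v oB2)
    (hty1 : ToutA1 oA1 = TinB2 iB2) (hty2 : ToutA2 oA2 = TinB1 iB1) :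
    ((∀ u v : VA1 ⊕ VB2, SerialComp A1 B2 oA1 iB2 u v →
        Sum.elim ToutA1 ToutB2 u = Sum.elim TinA1 TinB2 v) ∧
      (∀ v : VA1 ⊕ VB2, ¬ Relation.TransGen (SerialComp A1 B2 oA1 iB2) v v) ∧
      (∀ v : VA1 ⊕ VB2,
        Relation.ReflTransGen (SerialComp A1 B2 oA1 iB2) (Sum.inl iA1) v ∧
        Relation.ReflTransGen (SerialComp A1 B2 oA1 iB2) v (Sum.inr oB2))) ∧
    ((∀ u v : VA2 ⊕ VB1, SerialComp A2 B1 oA2 iB1 u v →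
        Sum.elim ToutA2 ToutB1 u = Sum.elim TinA2 TinB1 v) ∧
      (∀ v : VA2 ⊕ VB1, ¬ Relation.TransGen (SerialComp A2 B1 oA2 iB1) v v) ∧
      (∀ v : VA2 ⊕ VB1,
        Relation.ReflTransGen (SerialComp A2 B1 oA2 iB1) (Sum.inl iA2) v ∧
        Relation.ReflTransGen (SerialComp A2 B1 oA2 iB1) v (Sum.inr oB1))) := by
  exact ⟨serial_valid hwtA1 hwtB2 hacA1 hacB2 hcoA1 hcoB2 hty1,
        serial_valid hwtA2 hwtB1 hacA2 hacB1 hcoA2 hcoB1 hty2⟩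
end

section
/- Let E be an edge relation on V0 ⊕ V1 that is well-typed for the componentwise type assignments given by (Tin0, Tout0) on V0 and (Tin1, Tout1) on V1, and suppose every cross edge from the V0-side to the V1-side has target Sum.inr i1 and every cross edge from the V1-side to the V0-side has source Sum.inr o1, for designated interface vertices i1 o1 : V1. Let (E2, Tin2, Tout2) be a well-typed typed directed graph on V2 with interface vertices i2 o2 : V2 satisfying Tin2 i2 = Tin1 i1 and Tout2 o2 = Tout1 o1. Then the mutated graph E' on V0 ⊕ V2 — with E' (Sum.inl x) (Sum.inl y) ↔ E (Sum.inl x) (Sum.inl y), E' (Sum.inr x) (Sum.inr y) ↔ E2 x y, E' (Sum.inl x) (Sum.inr y) ↔ (E (Sum.inl x) (Sum.inr i1) ∧ y = i2), and E' (Sum.inr x) (Sum.inl y) ↔ (x = o2 ∧ E (Sum.inr o1) (Sum.inl y)) — is well-typed for the componentwise type assignments (Tin0, Tout0) on V0 and (Tin2, Tout2) on V2. -/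
/-- Subgraph mutation: replacing the `V1`-part of a graph on `V0 ⊕ V1` by a
graph `E2` on `V2` whose interface input/output types match those of the
replaced part yields a well-typed graph on `V0 ⊕ V2`. -/
theorem subgraphMutation_wellTyped {V0 V1 V2 L : Type*}
    (E : V0 ⊕ V1 → V0 ⊕ V1 → Prop)
    (Tin0 Tout0 : V0 → L) (Tin1 Tout1 : V1 → L)
    (hwt : ∀ u v, E u v → Sum.elim Tout0 Tout1 u = Sum.elim Tin0 Tin1 v)
    (i1 o1 : V1)
    (hcross_in : ∀ (x : V0) (y : V1), E (Sum.inl x) (Sum.inr y) → y = i1)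
    (hcross_out : ∀ (x : V1) (y : V0), E (Sum.inr x) (Sum.inl y) → x = o1)
    (E2 : V2 → V2 → Prop) (Tin2 Tout2 : V2 → L)
    (hwt2 : ∀ u v, E2 u v → Tout2 u = Tin2 v)
    (i2 o2 : V2) (htyin : Tin2 i2 = Tin1 i1) (htyout : Tout2 o2 = Tout1 o1)
    (E' : V0 ⊕ V2 → V0 ⊕ V2 → Prop)
    (hE'll : ∀ (x y : V0), E' (Sum.inl x) (Sum.inl y) ↔ E (Sum.inl x) (Sum.inl y))
    (hE'rr : ∀ (x y : V2), E' (Sum.inr x) (Sum.inr y) ↔ E2 x y)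
    (hE'lr : ∀ (x : V0) (y : V2),
      E' (Sum.inl x) (Sum.inr y) ↔ (E (Sum.inl x) (Sum.inr i1) ∧ y = i2))
    (hE'rl : ∀ (x : V2) (y : V0),
      E' (Sum.inr x) (Sum.inl y) ↔ (x = o2 ∧ E (Sum.inr o1) (Sum.inl y))) :
    ∀ u v : V0 ⊕ V2, E' u v →
      Sum.elim Tout0 Tout2 u = Sum.elim Tin0 Tin2 v := by
  rintro (x | x) (y | y) h
  · exact hwt _ _ ((hE'll x y).mp h)
  · obtain ⟨hE, rfl⟩ := (hE'lr x y).mp h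
    simpa [htyin] using hwt _ _ hE
  · obtain ⟨rfl, hE⟩ := (hE'rl x y).mp h
    simpa [htyout] using hwt _ _ hE
  · exact hwt2 _ _ ((hE'rr x y).mp h)
end
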